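/- Let X₁,…,Xₙ be i.i.d. with density f_p(x) = p x^{p-1}, 0 < p < 1, on (0,1], and Q = ∑(Xᵢ - X̄)². Then P{Q ≤ x} = O(x^{min(np, n-1)/2}) as x → 0 when np ≠ n-1, and P{Q ≤ x} = O(x^{(n-1)/2} ln(1/x)) when np = n-1. -/

import Mathlib

open MeasureTheory ProbabilityTheory Filter Real Asymptotics

section Helpers


-- upper concavity bound: a^q - b^q ≤ q * b^(q-1) * (a-b), 0 < b ≤ a, 0 ≤ q ≤ 1
lemma rpow_diff_le {a b q : ℝ} (hb : 0 < b) (hab : b ≤ a) (hq0 : 0 ≤ q) (hq1 : q ≤ 1) :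
    a ^ q - b ^ q ≤ q * b ^ (q - 1) * (a - b) := by
  have hs : (-1 : ℝ) ≤ (a - b) / b := by
    have : (0:ℝ) ≤ (a - b) / b := div_nonneg (by linarith) hb.le
    linarith
  have hber := rpow_one_add_le_one_add_mul_self hs hq0 hq1
  have hab' : 1 + (a - b) / b = a / b := by field_simp; ring
  rw [hab'] at hber
  have ha : 0 ≤ a := hb.le.trans hab
  rw [Real.div_rpow ha hb.le] at hber
  have hbq : 0 < b ^ q := Real.rpow_pos_of_pos hb q
  have := mul_le_mul_of_nonneg_left hber hbq.le
  rw [mul_div_cancel₀ _ (ne_of_gt hbq)] at this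
  calc a ^ q - b ^ q ≤ b ^ q * (1 + q * ((a - b) / b)) - b ^ q := by linarith
    _ = q * (b ^ q / b) * (a - b) := by ring
    _ = q * b ^ (q - 1) * (a - b) := by
        rw [← Real.rpow_sub_one hb.ne' q]

-- lower bound: q * a^(q-1) * (a-b) ≤ a^q - b^q, for 0 ≤ b ≤ a, 0 < a, 0 ≤ q ≤ 1
lemma le_rpow_diff {a b q : ℝ} (ha : 0 < a) (hb : 0 ≤ b) (hab : b ≤ a) (hq0 : 0 ≤ q) (hq1 : q ≤ 1) :
    q * a ^ (q - 1) * (a - b) ≤ a ^ q - b ^ q := by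
  have hs : (-1 : ℝ) ≤ (b - a) / a := by
    rw [le_div_iff₀ ha]; linarith
  have hber := rpow_one_add_le_one_add_mul_self hs hq0 hq1
  have hab' : 1 + (b - a) / a = b / a := by field_simp; ring
  rw [hab'] at hber
  rw [Real.div_rpow hb ha.le] at hber
  have haq : 0 < a ^ q := Real.rpow_pos_of_pos ha q
  have := mul_le_mul_of_nonneg_left hber haq.le
  rw [mul_div_cancel₀ _ (ne_of_gt haq)] at this
  have h2 : a ^ q * (1 + q * ((b - a) / a)) = a ^ q - q * (a ^ q / a) * (a - b) := by ring
  rw [h2, ← Real.rpow_sub_one ha.ne' q] at this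
  linarith

lemma sum_rpow_le_tsum {c : ℝ} (hc : c < -1) (K : ℕ) :
    ∑ k ∈ Finset.range K, ((k : ℝ) + 1) ^ c ≤ ∑' k : ℕ, ((k : ℝ) + 1) ^ c := by
  have hs : Summable (fun k : ℕ => ((k : ℝ) + 1) ^ c) := by
    have := (Real.summable_nat_rpow (p := c)).mpr hc
    have h2 := (summable_nat_add_iff 1).mpr this
    simpa [Nat.cast_add] using h2
  exact Summable.sum_le_tsum _ (fun i _ => Real.rpow_nonneg (by positivity) c) hs

lemma sum_rpow_le_rpow {c : ℝ} (hc : -1 < c) (hc0 : c < 0) (K : ℕ) :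
    ∑ k ∈ Finset.range K, ((k : ℝ) + 1) ^ c ≤ ((K : ℝ)) ^ (c + 1) / (c + 1) := by
  induction K with
  | zero => simp [Real.zero_rpow (by linarith : c + 1 ≠ 0)]
  | succ K ih =>
    rw [Finset.sum_range_succ]
    have key : (c + 1) * ((K : ℝ) + 1) ^ c ≤ ((K : ℝ) + 1) ^ (c + 1) - (K : ℝ) ^ (c + 1) := by
      have := le_rpow_diff (a := (K : ℝ) + 1) (b := (K : ℝ)) (q := c + 1)
        (by positivity) (by positivity) (by linarith) (by linarith) (by linarith)
      have hsub : ((K : ℝ) + 1) - (K : ℝ) = 1 := by ring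
      rw [hsub, mul_one] at this
      have hexp : c + 1 - 1 = c := by ring
      rwa [hexp] at this
    have hco : (0:ℝ) < c + 1 := by linarith
    push_cast
    rw [le_div_iff₀ hco] at ih ⊢
    nlinarith [ih]

lemma sum_inv_le_log (K : ℕ) (hK : 1 ≤ K) :
    ∑ k ∈ Finset.range K, ((k : ℝ) + 1) ^ (-1 : ℝ) ≤ 1 + Real.log K := by
  induction K with
  | zero => omega
  | succ K ih =>
    rcases Nat.eq_or_lt_of_le hK with h | h
    · simp [← h, Real.rpow_neg_one]
    · have hK1 : 1 ≤ K := by omega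
      have hKpos : (0:ℝ) < K := by exact_mod_cast Nat.lt_of_lt_of_le Nat.zero_lt_one hK1
      have step : ((K : ℝ) + 1) ^ (-1 : ℝ) ≤ Real.log (K + 1) - Real.log K := by
        have hlog := Real.log_le_sub_one_of_pos (x := (K : ℝ) / (K + 1)) (by positivity)
        rw [Real.log_div hKpos.ne' (by positivity)] at hlog
        rw [Real.rpow_neg_one]
        have : (K : ℝ) / (K + 1) - 1 = -((K : ℝ) + 1)⁻¹ := by field_simp; ring
        rw [this] at hlog
        linarith
      rw [Finset.sum_range_succ]
      push_cast
      have := ih hK1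
      linarith


lemma nu_Ioc_le (p : ℝ) (hp : 0 < p) {a b : ℝ} (ha : 0 ≤ a) (hab : a ≤ b) :
    ((volume.restrict (Set.Ioc (0:ℝ) 1)).withDensity
      (fun x => ENNReal.ofReal (p * x ^ (p - 1)))) (Set.Ioc a b)
      ≤ ENNReal.ofReal (b ^ p - a ^ p) := by
  rw [withDensity_apply _ measurableSet_Ioc,
    Measure.restrict_restrict measurableSet_Ioc]
  have hmono : (volume.restrict (Set.Ioc a b ∩ Set.Ioc 0 1)) ≤ volume.restrict (Set.Ioc a b) :=
    Measure.restrict_mono Set.inter_subset_left le_rfl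
  refine le_trans (lintegral_mono' hmono le_rfl) ?_
  have hii : IntervalIntegrable (fun t : ℝ => p * t ^ (p - 1)) volume a b :=
    (intervalIntegral.intervalIntegrable_rpow' (by linarith)).const_mul p
  have hint : IntegrableOn (fun t : ℝ => p * t ^ (p - 1)) (Set.Ioc a b) volume := by
    rwa [intervalIntegrable_iff_integrableOn_Ioc_of_le hab] at hii
  have hnn : 0 ≤ᵐ[volume.restrict (Set.Ioc a b)] fun t : ℝ => p * t ^ (p - 1) := by
    refine (ae_restrict_iff' measurableSet_Ioc).mpr (ae_of_all _ fun t ht => ?_)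
    have : 0 < t := lt_of_le_of_lt ha ht.1
    positivity
  rw [← ofReal_integral_eq_lintegral_ofReal hint hnn]
  apply ENNReal.ofReal_le_ofReal
  rw [← intervalIntegral.integral_of_le hab, intervalIntegral.integral_const_mul,
    integral_rpow (Or.inl (by linarith))]
  have : p - 1 + 1 = p := by ring
  rw [this, mul_div_cancel₀ _ (ne_of_gt hp)]

lemma sum_split (p : ℝ) (hp : 0 < p) (hp1 : p < 1) (n : ℕ) {ε : ℝ} (hε : 0 < ε) (K : ℕ) :
    ∑ k ∈ Finset.range K, ((((k:ℝ)+2)*ε)^p - ((k:ℝ)*ε)^p)^n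
      ≤ ε^(p*(n:ℝ)) * ((2:ℝ)^(p*(n:ℝ))
        + (2*p)^n * ∑ k ∈ Finset.range (K-1), ((k:ℝ)+1)^((p-1)*(n:ℝ))) := by
  have hinner_nn : (0:ℝ) ≤ ∑ k ∈ Finset.range (K-1), ((k:ℝ)+1)^((p-1)*(n:ℝ)) :=
    Finset.sum_nonneg fun k _ => Real.rpow_nonneg (by positivity) _
  have hεp : (0:ℝ) < ε ^ (p*(n:ℝ)) := Real.rpow_pos_of_pos hε _
  rcases Nat.eq_zero_or_pos K with hK0 | hKpos
  · rw [hK0]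
    simp only [Finset.range_zero, Finset.sum_empty]
    positivity
  obtain ⟨M, rfl⟩ : ∃ M, K = M + 1 := ⟨K - 1, (Nat.succ_pred_eq_of_pos hKpos).symm⟩
  rw [Finset.sum_range_succ']
  have hM : M + 1 - 1 = M := rfl
  rw [hM]
  have h0 : ((((0:ℕ):ℝ)+2)*ε)^p - (((0:ℕ):ℝ)*ε)^p = (2*ε)^p := by
    norm_num [Real.zero_rpow hp.ne']
  have h0' : (((2*ε)^p)^n : ℝ) = ε^(p*(n:ℝ)) * (2:ℝ)^(p*(n:ℝ)) := by
    rw [Real.mul_rpow (by norm_num) hε.le, mul_pow,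
      ← Real.rpow_natCast ((2:ℝ)^p) n, ← Real.rpow_natCast (ε^p) n,
      ← Real.rpow_mul (by norm_num) , ← Real.rpow_mul hε.le, mul_comm]
  have hterm : ∀ k : ℕ, (((((k+1:ℕ):ℝ)+2)*ε)^p - (((k+1:ℕ):ℝ)*ε)^p)^n
      ≤ ε^(p*(n:ℝ)) * ((2*p)^n * ((k:ℝ)+1)^((p-1)*(n:ℝ))) := by
    intro k
    have hk1 : (0:ℝ) < ((k:ℝ)+1)*ε := by positivity
    have hd := rpow_diff_le (a := ((k:ℝ)+1+2)*ε) (b := ((k:ℝ)+1)*ε) (q := p)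
      hk1 (by nlinarith) hp.le hp1.le
    have hsub : ((k:ℝ)+1+2)*ε - ((k:ℝ)+1)*ε = 2*ε := by ring
    rw [hsub] at hd
    have hbd : (((k:ℝ)+1+2)*ε)^p - (((k:ℝ)+1)*ε)^p ≤ 2*p*ε^p * ((k:ℝ)+1)^(p-1) := by
      have hsplit : (((k:ℝ)+1)*ε)^(p-1) = ((k:ℝ)+1)^(p-1) * ε^(p-1) :=
        Real.mul_rpow (by positivity) hε.le
      rw [hsplit] at hd
      have hee : ε^(p-1) * (2*ε) = 2 * ε^p := by
        rw [Real.rpow_sub_one hε.ne' p]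
        field_simp
      calc (((k:ℝ)+1+2)*ε)^p - (((k:ℝ)+1)*ε)^p
          ≤ p * (((k:ℝ)+1)^(p-1) * ε^(p-1)) * (2*ε) := hd
        _ = p * ((k:ℝ)+1)^(p-1) * (ε^(p-1) * (2*ε)) := by ring
        _ = 2*p*ε^p * ((k:ℝ)+1)^(p-1) := by rw [hee]; ring
    have hnn : (0:ℝ) ≤ (((k:ℝ)+1+2)*ε)^p - (((k:ℝ)+1)*ε)^p := by
      have := Real.rpow_le_rpow (le_of_lt hk1) (by nlinarith : ((k:ℝ)+1)*ε ≤ ((k:ℝ)+1+2)*ε) hp.le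
      linarith
    have hpow := pow_le_pow_left₀ hnn hbd n
    have hrhs : (2*p*ε^p * ((k:ℝ)+1)^(p-1))^n
        = ε^(p*(n:ℝ)) * ((2*p)^n * ((k:ℝ)+1)^((p-1)*(n:ℝ))) := by
      rw [mul_pow, mul_pow, ← Real.rpow_natCast (ε^p) n, ← Real.rpow_natCast (((k:ℝ)+1)^(p-1)) n,
        ← Real.rpow_mul hε.le, ← Real.rpow_mul (by positivity)]
      ring
    rw [hrhs] at hpow
    push_cast at hpow ⊢
    convert hpow using 3 <;> ring
  have hsum := Finset.sum_le_sum (fun k (_ : k ∈ Finset.range M) => hterm k)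
  rw [← Finset.mul_sum] at hsum
  rw [Finset.mul_sum]
  push_cast at hsum ⊢
  simp only [zero_mul, zero_add, Real.zero_rpow hp.ne', sub_zero] at *
  rw [h0'] at *
  linarith [hsum]

lemma ceil_le_two_div {ε : ℝ} (hε : 0 < ε) (hε1 : ε ≤ 1) : (⌈1/ε⌉₊ : ℝ) ≤ 2/ε := by
  have h1 : (1:ℝ) ≤ 1/ε := by rw [le_div_iff₀ hε]; linarith
  have := Nat.ceil_lt_add_one (by positivity : (0:ℝ) ≤ 1/ε)
  have : (⌈1/ε⌉₊ : ℝ) < 1/ε + 1 := this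
  have h2 : 1/ε + 1 ≤ 2/ε := by
    rw [div_add' _ _ _ hε.ne', div_le_div_iff₀ hε hε]
    nlinarith
  linarith

lemma case_lt (p : ℝ) (hp : 0 < p) (hp1 : p < 1) (n : ℕ)
    (hnp : (n:ℝ)*p < (n:ℝ)-1) :
    ∃ C : ℝ, 0 ≤ C ∧ ∀ ε : ℝ, 0 < ε →
      ∑ k ∈ Finset.range ⌈1/ε⌉₊, ((((k:ℝ)+2)*ε)^p - ((k:ℝ)*ε)^p)^n
        ≤ C * ε^(p*(n:ℝ)) := by
  have hc : (p-1)*(n:ℝ) < -1 := by nlinarith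
  set T := ∑' k : ℕ, ((k : ℝ) + 1) ^ ((p-1)*(n:ℝ)) with hT
  have hTnn : 0 ≤ T := tsum_nonneg fun k => Real.rpow_nonneg (by positivity) _
  refine ⟨(2:ℝ)^(p*(n:ℝ)) + (2*p)^n * T, by positivity, fun ε hε => ?_⟩
  refine le_trans (sum_split p hp hp1 n hε _) ?_
  rw [mul_comm]
  gcongr
  exact sum_rpow_le_tsum hc _

lemma case_gt (p : ℝ) (hp : 0 < p) (hp1 : p < 1) (n : ℕ) (hn : 2 ≤ n)
    (hnp : (n:ℝ)-1 < (n:ℝ)*p) :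
    ∃ C : ℝ, 0 ≤ C ∧ ∀ ε : ℝ, 0 < ε → ε ≤ 1 →
      ∑ k ∈ Finset.range ⌈1/ε⌉₊, ((((k:ℝ)+2)*ε)^p - ((k:ℝ)*ε)^p)^n
        ≤ C * ε^((n:ℝ)-1) := by
  have hn' : (2:ℝ) ≤ n := by exact_mod_cast hn
  have hc1 : (-1:ℝ) < (p-1)*(n:ℝ) := by nlinarith
  have hc0 : (p-1)*(n:ℝ) < 0 := by nlinarith
  set c := (p-1)*(n:ℝ) with hcdef
  have hco : (0:ℝ) < c + 1 := by linarith
  refine ⟨(2:ℝ)^(p*(n:ℝ)) + (2*p)^n * ((2:ℝ)^(c+1) / (c+1)), by positivity, fun ε hε hε1 => ?_⟩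
  refine le_trans (sum_split p hp hp1 n hε _) ?_
  have hK2 : ((⌈1/ε⌉₊ - 1 : ℕ) : ℝ) ≤ 2/ε := by
    have h1 := ceil_le_two_div hε hε1
    have h2 : ((⌈1/ε⌉₊ - 1 : ℕ) : ℝ) ≤ (⌈1/ε⌉₊ : ℝ) := by
      exact_mod_cast Nat.sub_le _ 1
    linarith
  have hSig : ∑ k ∈ Finset.range (⌈1/ε⌉₊ - 1), ((k:ℝ)+1)^c ≤ (2/ε)^(c+1) / (c+1) := by
    refine le_trans (sum_rpow_le_rpow hc1 hc0 _) ?_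
    gcongr
  have hexp : p*(n:ℝ) - (c+1) = (n:ℝ)-1 := by rw [hcdef]; ring
  have he2 : ε^(p*(n:ℝ)) * (2/ε)^(c+1) = 2^(c+1) * ε^((n:ℝ)-1) := by
    rw [Real.div_rpow (by norm_num) hε.le, ← hexp, Real.rpow_sub hε]
    field_simp
  have he1 : ε^(p*(n:ℝ)) ≤ ε^((n:ℝ)-1) :=
    Real.rpow_le_rpow_of_exponent_ge hε hε1 (by rw [mul_comm]; linarith)
  have expand : ε^(p*(n:ℝ)) * ((2:ℝ)^(p*(n:ℝ)) + (2*p)^n * ((2/ε)^(c+1)/(c+1)))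
      = 2^(p*(n:ℝ)) * ε^(p*(n:ℝ)) + (2*p)^n * ((2:ℝ)^(c+1)/(c+1)) * ε^((n:ℝ)-1) := by
    linear_combination ((2*p)^n / (c+1)) * he2
  calc ε^(p*(n:ℝ)) * ((2:ℝ)^(p*(n:ℝ))
        + (2*p)^n * ∑ k ∈ Finset.range (⌈1/ε⌉₊-1), ((k:ℝ)+1)^c)
      ≤ ε^(p*(n:ℝ)) * ((2:ℝ)^(p*(n:ℝ)) + (2*p)^n * ((2/ε)^(c+1)/(c+1))) := by
        gcongr
    _ = 2^(p*(n:ℝ)) * ε^(p*(n:ℝ)) + (2*p)^n * ((2:ℝ)^(c+1)/(c+1)) * ε^((n:ℝ)-1) := expand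
    _ ≤ ((2:ℝ)^(p*(n:ℝ)) + (2*p)^n * ((2:ℝ)^(c+1) / (c+1))) * ε^((n:ℝ)-1) := by
        have h2p : (0:ℝ) < (2:ℝ)^(p*(n:ℝ)) := Real.rpow_pos_of_pos (by norm_num) _
        nlinarith [mul_le_mul_of_nonneg_left he1 h2p.le]

lemma case_eq (p : ℝ) (hp : 0 < p) (hp1 : p < 1) (n : ℕ) (hn : 2 ≤ n)
    (hnp : (n:ℝ)*p = (n:ℝ)-1) :
    ∃ C : ℝ, 0 ≤ C ∧ ∀ ε : ℝ, 0 < ε → ε ≤ 1 →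
      ∑ k ∈ Finset.range ⌈1/ε⌉₊, ((((k:ℝ)+2)*ε)^p - ((k:ℝ)*ε)^p)^n
        ≤ C * ε^((n:ℝ)-1) * (1 + Real.log (2/ε)) := by
  have hc : (p-1)*(n:ℝ) = -1 := by push_cast at hnp ⊢; nlinarith
  refine ⟨(2:ℝ)^(p*(n:ℝ)) + (2*p)^n, by positivity, fun ε hε hε1 => ?_⟩
  have hlog0 : 0 ≤ Real.log (2/ε) := Real.log_nonneg (by rw [le_div_iff₀ hε]; linarith)
  have hSig : ∑ k ∈ Finset.range (⌈1/ε⌉₊-1), ((k:ℝ)+1)^((p-1)*(n:ℝ))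
      ≤ 1 + Real.log (2/ε) := by
    rw [hc]
    rcases Nat.eq_zero_or_pos (⌈1/ε⌉₊-1) with h0 | hpos
    · rw [h0]
      simp only [Finset.range_zero, Finset.sum_empty]
      linarith
    · refine le_trans (sum_inv_le_log _ hpos) ?_
      have hle : ((⌈1/ε⌉₊-1 : ℕ):ℝ) ≤ 2/ε := by
        have h1 := ceil_le_two_div hε hε1
        have h2 : ((⌈1/ε⌉₊ - 1 : ℕ) : ℝ) ≤ (⌈1/ε⌉₊ : ℝ) := by exact_mod_cast Nat.sub_le _ 1
        linarith
      have := Real.log_le_log (by exact_mod_cast hpos) hle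
      linarith
  have heq : ε^(p*(n:ℝ)) = ε^((n:ℝ)-1) := by rw [mul_comm p (n:ℝ), hnp]
  refine le_trans (sum_split p hp hp1 n hε _) ?_
  rw [heq]
  have hεn : (0:ℝ) ≤ ε^((n:ℝ)-1) := Real.rpow_nonneg hε.le _
  have h2p : (0:ℝ) < (2:ℝ)^(p*(n:ℝ)) := Real.rpow_pos_of_pos (by norm_num) _
  have hpp : (0:ℝ) ≤ (2*p)^n := by positivity
  have hmain : (2:ℝ)^(p*(n:ℝ)) + (2*p)^n * ∑ k ∈ Finset.range (⌈1/ε⌉₊-1), ((k:ℝ)+1)^((p-1)*(n:ℝ))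
      ≤ ((2:ℝ)^(p*(n:ℝ)) + (2*p)^n) * (1 + Real.log (2/ε)) := by
    nlinarith [mul_le_mul_of_nonneg_left hSig hpp]
  calc ε^((n:ℝ)-1) * ((2:ℝ)^(p*(n:ℝ))
        + (2*p)^n * ∑ k ∈ Finset.range (⌈1/ε⌉₊-1), ((k:ℝ)+1)^((p-1)*(n:ℝ)))
      ≤ ε^((n:ℝ)-1) * (((2:ℝ)^(p*(n:ℝ)) + (2*p)^n) * (1 + Real.log (2/ε))) :=
        mul_le_mul_of_nonneg_left hmain hεn
    _ = ((2:ℝ)^(p*(n:ℝ)) + (2*p)^n) * ε^((n:ℝ)-1) * (1 + Real.log (2/ε)) := by ring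


lemma nu_compl_zero (p : ℝ) :
    ((volume.restrict (Set.Ioc (0:ℝ) 1)).withDensity
      (fun x => ENNReal.ofReal (p * x ^ (p - 1)))) ((Set.Ioc (0:ℝ) 1)ᶜ) = 0 := by
  rw [withDensity_apply _ measurableSet_Ioc.compl,
    Measure.restrict_restrict measurableSet_Ioc.compl]
  simp [Set.compl_inter_self]

lemma master_bound
    {Ω : Type*} [MeasurableSpace Ω] (μ : Measure Ω) [IsProbabilityMeasure μ]
    (p : ℝ) (hp : 0 < p) (hp1 : p < 1) (n : ℕ) (hn : 2 ≤ n)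
    (X : Fin n → Ω → ℝ) (hXm : ∀ i, Measurable (X i))
    (hindep : iIndepFun X μ)
    (hlaw : ∀ i, Measure.map (X i) μ =
      (volume.restrict (Set.Ioc (0:ℝ) 1)).withDensity
        (fun x => ENNReal.ofReal (p * x ^ (p - 1))))
    (Q : Ω → ℝ) (hQ : ∀ ω, Q ω = ∑ i, (X i ω - (∑ j, X j ω) / n)^2)
    {x : ℝ} (hx : 0 < x) :
    (μ {ω | Q ω ≤ x}).toReal ≤
      ∑ k ∈ Finset.range (⌈1/(2*Real.sqrt x)⌉₊),
        ((((k:ℝ)+2)*(2*Real.sqrt x))^p - ((k:ℝ)*(2*Real.sqrt x))^p)^n := by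
  set ε : ℝ := 2*Real.sqrt x with hε
  have hε0 : 0 < ε := by positivity
  set ν := ((volume.restrict (Set.Ioc (0:ℝ) 1)).withDensity
      (fun x => ENNReal.ofReal (p * x ^ (p - 1)))) with hν
  set K := ⌈1/ε⌉₊ with hK
  set G : Set Ω := ⋂ i, X i ⁻¹' (Set.Ioc (0:ℝ) 1) with hG
  set A : ℕ → Set Ω := fun k => ⋂ i, X i ⁻¹' (Set.Ioc ((k:ℝ)*ε) (((k:ℝ)+2)*ε)) with hA
  -- preimage measures
  have hpre : ∀ i (s : Set ℝ), MeasurableSet s → μ (X i ⁻¹' s) = ν s := by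
    intro i s hs
    rw [← Measure.map_apply (hXm i) hs, hlaw i]
  -- G has full measure
  have hG0 : μ Gᶜ = 0 := by
    rw [hG, Set.compl_iInter]
    refine measure_iUnion_null fun i => ?_
    rw [← Set.preimage_compl, hpre i _ measurableSet_Ioc.compl]
    exact nu_compl_zero p
  -- inclusion
  have hincl : {ω | Q ω ≤ x} ∩ G ⊆ ⋃ k ∈ Finset.range K, A k := by
    rintro ω ⟨hQx, hωG⟩
    simp only [Set.mem_setOf_eq] at hQx
    have hmem : ∀ i, X i ω ∈ Set.Ioc (0:ℝ) 1 := fun i => Set.mem_iInter.mp hωG i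
    -- each deviation is small
    have hdev : ∀ i, |X i ω - (∑ j, X j ω) / n| ≤ Real.sqrt x := by
      intro i
      refine Real.abs_le_sqrt ?_
      calc (X i ω - (∑ j, X j ω) / n)^2
          ≤ ∑ j, (X j ω - (∑ j, X j ω) / n)^2 :=
            Finset.single_le_sum (f := fun j => (X j ω - (∑ j, X j ω) / n)^2)
              (fun j _ => sq_nonneg _) (Finset.mem_univ i)
        _ ≤ x := by rw [← hQ ω]; exact hQx
    have hdiff : ∀ i j, X i ω - X j ω ≤ ε := by
      intro i j
      have h1 := abs_le.mp (hdev i)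
      have h2 := abs_le.mp (hdev j)
      rw [hε]; linarith [h1.2, h2.1]
    -- the minimum
    obtain ⟨j₀, -, hj₀⟩ := Finset.exists_min_image Finset.univ (fun i => X i ω)
      ⟨⟨0, by omega⟩, Finset.mem_univ _⟩
    set m := X j₀ ω with hm
    have hm0 : 0 < m := (hmem j₀).1
    have hm1 : m ≤ 1 := (hmem j₀).2
    set k := ⌈m/ε⌉₊ - 1 with hkdef
    have hcp : 0 < ⌈m/ε⌉₊ := Nat.ceil_pos.mpr (by positivity)
    have hk1 : k + 1 = ⌈m/ε⌉₊ := Nat.succ_pred_eq_of_pos hcp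
    have hklt : (k:ℝ) < m/ε := Nat.lt_ceil.mp (by omega)
    have hkup : m/ε ≤ (k:ℝ)+1 := by
      have := Nat.le_ceil (m/ε)
      rw [← hk1] at this
      push_cast at this
      linarith
    have hkK : k ∈ Finset.range K := by
      rw [Finset.mem_range, hK]
      have hle : ⌈m/ε⌉₊ ≤ ⌈1/ε⌉₊ := Nat.ceil_le_ceil (by gcongr)
      omega
    refine Set.mem_biUnion hkK ?_
    refine Set.mem_iInter.mpr fun i => ?_
    constructor
    · exact lt_of_lt_of_le ((lt_div_iff₀ hε0).mp hklt) (hj₀ i (Finset.mem_univ i))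
    · have h1 : X i ω ≤ m + ε := by linarith [hdiff i j₀]
      have h2 : m ≤ ((k:ℝ)+1)*ε := by
        rw [div_le_iff₀ hε0] at hkup; linarith
      linarith [h1, h2]
  -- measure computation
  have hAk : ∀ k : ℕ, μ (A k) ≤ ENNReal.ofReal (((((k:ℝ)+2)*ε)^p - ((k:ℝ)*ε)^p)^n) := by
    intro k
    have hprod : μ (A k) = (ν (Set.Ioc ((k:ℝ)*ε) (((k:ℝ)+2)*ε)))^n := by
      rw [hA]
      rw [hindep.meas_iInter (fun i => ⟨Set.Ioc ((k:ℝ)*ε) (((k:ℝ)+2)*ε), measurableSet_Ioc, rfl⟩)]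
      simp only [hpre _ _ measurableSet_Ioc]
      rw [Finset.prod_const, Finset.card_univ, Fintype.card_fin]
    rw [hprod]
    have hr : 0 ≤ (((k:ℝ)+2)*ε)^p - ((k:ℝ)*ε)^p := by
      have := Real.rpow_le_rpow (by positivity) (by nlinarith : (k:ℝ)*ε ≤ ((k:ℝ)+2)*ε) hp.le
      linarith
    calc (ν (Set.Ioc ((k:ℝ)*ε) (((k:ℝ)+2)*ε)))^n
        ≤ (ENNReal.ofReal ((((k:ℝ)+2)*ε)^p - ((k:ℝ)*ε)^p))^n :=
          pow_le_pow_left' (nu_Ioc_le p hp (by positivity) (by nlinarith)) n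
      _ = ENNReal.ofReal (((((k:ℝ)+2)*ε)^p - ((k:ℝ)*ε)^p)^n) :=
          (ENNReal.ofReal_pow hr n).symm
  -- put together
  have hchain : μ {ω | Q ω ≤ x} ≤ ENNReal.ofReal
      (∑ k ∈ Finset.range K, ((((k:ℝ)+2)*ε)^p - ((k:ℝ)*ε)^p)^n) := by
    have h1 : μ {ω | Q ω ≤ x} ≤ μ (⋃ k ∈ Finset.range K, A k) := by
      calc μ {ω | Q ω ≤ x} ≤ μ (({ω | Q ω ≤ x} ∩ G) ∪ Gᶜ) := by
            apply measure_mono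
            intro ω hω
            by_cases hg : ω ∈ G
            · exact Or.inl ⟨hω, hg⟩
            · exact Or.inr hg
        _ ≤ μ ({ω | Q ω ≤ x} ∩ G) + μ Gᶜ := measure_union_le _ _
        _ = μ ({ω | Q ω ≤ x} ∩ G) := by rw [hG0, add_zero]
        _ ≤ μ (⋃ k ∈ Finset.range K, A k) := measure_mono hincl
    calc μ {ω | Q ω ≤ x} ≤ μ (⋃ k ∈ Finset.range K, A k) := h1
      _ ≤ ∑ k ∈ Finset.range K, μ (A k) := measure_biUnion_finset_le _ _
      _ ≤ ∑ k ∈ Finset.range K, ENNReal.ofReal (((((k:ℝ)+2)*ε)^p - ((k:ℝ)*ε)^p)^n) :=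
          Finset.sum_le_sum fun k _ => hAk k
      _ = ENNReal.ofReal (∑ k ∈ Finset.range K, ((((k:ℝ)+2)*ε)^p - ((k:ℝ)*ε)^p)^n) := by
          rw [ENNReal.ofReal_sum_of_nonneg]
          intro k _
          have := Real.rpow_le_rpow (by positivity : (0:ℝ) ≤ (k:ℝ)*ε)
            (by nlinarith : (k:ℝ)*ε ≤ ((k:ℝ)+2)*ε) hp.le
          exact pow_nonneg (by linarith) n
  refine ENNReal.toReal_le_of_le_ofReal ?_ hchain
  apply Finset.sum_nonneg
  intro k _
  have := Real.rpow_le_rpow (by positivity : (0:ℝ) ≤ (k:ℝ)*ε)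
    (by nlinarith : (k:ℝ)*ε ≤ ((k:ℝ)+2)*ε) hp.le
  exact pow_nonneg (by linarith) n

lemma two_sqrt_rpow {x : ℝ} (hx : 0 < x) (e : ℝ) :
    (2*Real.sqrt x)^e = 2^e * x^(e/2) := by
  rw [Real.mul_rpow (by norm_num) (Real.sqrt_nonneg x), Real.sqrt_eq_rpow,
    ← Real.rpow_mul hx.le, one_div, inv_mul_eq_div]

end Helpers

theorem cdf_Q_small_x_estimate
    {Ω : Type*} [MeasurableSpace Ω] (μ : Measure Ω) [IsProbabilityMeasure μ]
    (p : ℝ) (hp : 0 < p) (hp1 : p < 1) (n : ℕ) (hn : 2 ≤ n)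
    (X : Fin n → Ω → ℝ) (hXm : ∀ i, Measurable (X i))
    (hindep : iIndepFun X μ)
    (hlaw : ∀ i, Measure.map (X i) μ =
      (volume.restrict (Set.Ioc (0:ℝ) 1)).withDensity
        (fun x => ENNReal.ofReal (p * x ^ (p - 1))))
    (Q : Ω → ℝ) (hQ : ∀ ω, Q ω = ∑ i, (X i ω - (∑ j, X j ω) / n)^2) :
    ((n : ℝ) * p ≠ (n : ℝ) - 1 →
      (fun x : ℝ => (μ {ω | Q ω ≤ x}).toReal) =O[nhdsWithin 0 (Set.Ioi 0)]
        (fun x : ℝ => x ^ (min ((n:ℝ) * p) ((n:ℝ) - 1) / 2))) ∧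
    ((n : ℝ) * p = (n : ℝ) - 1 →
      (fun x : ℝ => (μ {ω | Q ω ≤ x}).toReal) =O[nhdsWithin 0 (Set.Ioi 0)]
        (fun x : ℝ => x ^ (((n:ℝ) - 1) / 2) * Real.log (1/x))) := by
  have hev : ∀ᶠ x in nhdsWithin (0:ℝ) (Set.Ioi 0),
      x ∈ Set.Ioo (0:ℝ) (min (1/4) (Real.exp (-2))) := by
    refine Ioo_mem_nhdsGT_of_mem ⟨le_refl 0, ?_⟩
    positivity
  have hmaster := fun x (hx : 0 < x) => master_bound μ p hp hp1 n hn X hXm hindep hlaw Q hQ hx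
  have heps : ∀ x : ℝ, x ∈ Set.Ioo (0:ℝ) (min (1/4) (Real.exp (-2))) →
      0 < 2*Real.sqrt x ∧ 2*Real.sqrt x ≤ 1 := by
    intro x hx
    have hx0 : 0 < x := hx.1
    have hx4 : x < 1/4 := lt_of_lt_of_le hx.2 (min_le_left _ _)
    have hs : Real.sqrt x < 1/2 := by
      rw [show (1:ℝ)/2 = Real.sqrt (1/4) by
        rw [show (1:ℝ)/4 = (1/2)^2 by norm_num, Real.sqrt_sq (by norm_num)]]
      exact Real.sqrt_lt_sqrt hx0.le hx4
    exact ⟨by positivity, by linarith⟩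
  constructor
  · intro hne
    rcases lt_or_gt_of_ne hne with hlt | hgt
    · -- np < n - 1, min = np
      obtain ⟨C, hC0, hC⟩ := case_lt p hp hp1 n hlt
      rw [isBigO_iff]
      refine ⟨C * 2^(p*(n:ℝ)), ?_⟩
      filter_upwards [hev] with x hx
      have hx0 : 0 < x := hx.1
      have hε := (heps x hx).1
      have hbound := le_trans (hmaster x hx0) (hC _ hε)
      rw [two_sqrt_rpow hx0] at hbound
      have hmin : min ((n:ℝ)*p) ((n:ℝ)-1) = (n:ℝ)*p := min_eq_left hlt.le
      rw [hmin]
      simp only [Real.norm_eq_abs]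
      rw [abs_of_nonneg ENNReal.toReal_nonneg,
        abs_of_nonneg (Real.rpow_nonneg hx0.le _)]
      calc (μ {ω | Q ω ≤ x}).toReal ≤ C * (2^(p*(n:ℝ)) * x^(p*(n:ℝ)/2)) := hbound
        _ = C * 2^(p*(n:ℝ)) * x^((n:ℝ)*p/2) := by rw [mul_comm p ((n:ℝ))]; ring
    · -- np > n - 1, min = n-1
      obtain ⟨C, hC0, hC⟩ := case_gt p hp hp1 n hn hgt
      rw [isBigO_iff]
      refine ⟨C * 2^((n:ℝ)-1), ?_⟩
      filter_upwards [hev] with x hx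
      have hx0 : 0 < x := hx.1
      obtain ⟨hε, hε1⟩ := heps x hx
      have hbound := le_trans (hmaster x hx0) (hC _ hε hε1)
      rw [two_sqrt_rpow hx0] at hbound
      have hmin : min ((n:ℝ)*p) ((n:ℝ)-1) = (n:ℝ)-1 := min_eq_right hgt.le
      rw [hmin]
      simp only [Real.norm_eq_abs]
      rw [abs_of_nonneg ENNReal.toReal_nonneg,
        abs_of_nonneg (Real.rpow_nonneg hx0.le _)]
      calc (μ {ω | Q ω ≤ x}).toReal ≤ C * (2^((n:ℝ)-1) * x^(((n:ℝ)-1)/2)) := hbound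
        _ = C * 2^((n:ℝ)-1) * x^(((n:ℝ)-1)/2) := by ring
  · intro heq
    obtain ⟨C, hC0, hC⟩ := case_eq p hp hp1 n hn heq
    rw [isBigO_iff]
    refine ⟨C * 2^((n:ℝ)-1), ?_⟩
    filter_upwards [hev] with x hx
    have hx0 : 0 < x := hx.1
    have hxe : x < Real.exp (-2) := lt_of_lt_of_le hx.2 (min_le_right _ _)
    obtain ⟨hε, hε1⟩ := heps x hx
    have hbound := le_trans (hmaster x hx0) (hC _ hε hε1)
    rw [two_sqrt_rpow hx0] at hbound
    -- log computation
    have hsx : 0 < Real.sqrt x := Real.sqrt_pos.mpr hx0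
    have hlogx : Real.log x < -2 := by
      have := Real.log_lt_log hx0 hxe
      rwa [Real.log_exp] at this
    have hL : Real.log (1/x) = -Real.log x := by
      rw [one_div, Real.log_inv]
    have hL2 : 2 < Real.log (1/x) := by rw [hL]; linarith
    have hlog2e : Real.log (2/(2*Real.sqrt x)) = Real.log (1/x) / 2 := by
      have h2e : 2/(2*Real.sqrt x) = (Real.sqrt x)⁻¹ := by
        field_simp
      rw [h2e, Real.log_inv, Real.log_sqrt hx0.le, hL]
      ring
    have hfac : 1 + Real.log (2/(2*Real.sqrt x)) ≤ Real.log (1/x) := by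
      rw [hlog2e]; linarith
    simp only [Real.norm_eq_abs]
    rw [abs_of_nonneg ENNReal.toReal_nonneg]
    have hrhs0 : 0 ≤ x^(((n:ℝ)-1)/2) * Real.log (1/x) := by
      have := Real.rpow_nonneg hx0.le (((n:ℝ)-1)/2)
      nlinarith
    rw [abs_of_nonneg hrhs0]
    have hxp : (0:ℝ) ≤ x^(((n:ℝ)-1)/2) := Real.rpow_nonneg hx0.le _
    calc (μ {ω | Q ω ≤ x}).toReal
        ≤ C * (2^((n:ℝ)-1) * x^(((n:ℝ)-1)/2)) * (1 + Real.log (2/(2*Real.sqrt x))) := hbound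
      _ ≤ C * (2^((n:ℝ)-1) * x^(((n:ℝ)-1)/2)) * Real.log (1/x) := by
          have h2p : (0:ℝ) ≤ 2^((n:ℝ)-1) := (Real.rpow_pos_of_pos (by norm_num) _).le
          have : (0:ℝ) ≤ C * (2^((n:ℝ)-1) * x^(((n:ℝ)-1)/2)) := by positivity
          nlinarith
      _ = C * 2^((n:ℝ)-1) * (x^(((n:ℝ)-1)/2) * Real.log (1/x)) := by ring
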